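/- Let p be a prime, F, G : S → ℤ/pℤ functions defined on a subset S of ℤ/pℤ, and define K(n₁,n₂) = (1/p) ∑_{y ∈ S} e_p(n₁ F(y) + n₂ G(y)). Then ∑_{n₁,m₁,a,b,b' ∈ ℤ/pℤ} K(n₁-b,b) · conj(K(m₁-b,b)) · conj(K(n₁-b,b-a)) · K(m₁-b,b-a) · conj(K(n₁-b',b')) · K(m₁-b',b') · K(n₁-b',b'-a) · conj(K(m₁-b',b'-a)) = (1/p³)·N, where N is the number of tuples (y₁,…,y₈) ∈ S⁸ satisfying the five equations: F(y₁)-G(y₁)-F(y₂)+G(y₂)-F(y₃)+G(y₃)+F(y₄)-G(y₄)=0; F(y₅)-G(y₅)-F(y₆)+G(y₆)-F(y₇)+G(y₇)+F(y₈)-G(y₈)=0; F(y₁)-F(y₃)-F(y₅)+F(y₇)=0; F(y₂)-F(y₄)-F(y₆)+F(y₈)=0; G(y₃)-G(y₄)-G(y₇)+G(y₈)=0. -/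

import Mathlib

open Finset

noncomputable def ep (p : ℕ) (x : ZMod p) : ℂ :=
  Complex.exp (2 * Real.pi * Complex.I * x.val / p)

noncomputable def ft (p : ℕ) [NeZero p] (f : ZMod p → ℂ) (ξ : ZMod p) : ℂ :=
  (1 / p) * ∑ x : ZMod p, f x * ep p (-(x * ξ))

noncomputable def L2 (p : ℕ) [NeZero p] (f : ZMod p → ℂ) : ℝ :=
  Real.sqrt ((1 / p) * ∑ x : ZMod p, ‖f x‖ ^ 2)
/-- The `𝔽_p`-points of the Roth variety associated to `F, G` on `S`:
tuples `(y₁,…,y₈) ∈ S⁸` satisfying the five defining equations. -/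
def rothSet (p : ℕ) [NeZero p] (S : Finset (ZMod p)) (F G : ZMod p → ZMod p) :
    Finset (Fin 8 → ZMod p) :=
  Finset.univ.filter (fun y =>
    (∀ i, y i ∈ S) ∧
    F (y 0) - G (y 0) - F (y 1) + G (y 1) - F (y 2) + G (y 2) + F (y 3) - G (y 3) = 0 ∧
    F (y 4) - G (y 4) - F (y 5) + G (y 5) - F (y 6) + G (y 6) + F (y 7) - G (y 7) = 0 ∧
    F (y 0) - F (y 2) - F (y 4) + F (y 6) = 0 ∧
    F (y 1) - F (y 3) - F (y 5) + F (y 7) = 0 ∧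
    G (y 2) - G (y 3) - G (y 6) + G (y 7) = 0)

lemma ep_eq_char (p : ℕ) [NeZero p] (x : ZMod p) : ep p x = ZMod.stdAddChar x := by
  have h := ZMod.stdAddChar_coe (N := p) (x.val : ℤ)
  rw [show (((x.val : ℤ) : ZMod p)) = x by push_cast [ZMod.natCast_val, ZMod.cast_id]; rfl] at h
  rw [ep, h]; push_cast; ring_nf

lemma conj_char (p : ℕ) [NeZero p] (x : ZMod p) :
    (starRingEnd ℂ) (ZMod.stdAddChar x) = ZMod.stdAddChar (-x) := by
  rw [ZMod.stdAddChar_apply, ZMod.stdAddChar_apply,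
    show ZMod.toCircle (-x) = (ZMod.toCircle x)⁻¹ from AddChar.map_neg_eq_inv _ _,
    Circle.coe_inv_eq_conj]

lemma swap6 {M : Type*} [AddCommMonoid M] {α β : Type*} [Fintype α] (t : Finset β)
    (f : α → α → α → α → α → β → M) :
    (∑ a : α, ∑ b : α, ∑ c : α, ∑ d : α, ∑ e : α, ∑ y ∈ t, f a b c d e y)
      = ∑ y ∈ t, ∑ a : α, ∑ b : α, ∑ c : α, ∑ d : α, ∑ e : α, f a b c d e y := by
  refine (Finset.sum_congr rfl fun a _ => Finset.sum_congr rfl fun b _ =>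
    Finset.sum_congr rfl fun c _ => Finset.sum_congr rfl fun d _ => Finset.sum_comm).trans ?_
  refine (Finset.sum_congr rfl fun a _ => Finset.sum_congr rfl fun b _ =>
    Finset.sum_congr rfl fun c _ => Finset.sum_comm).trans ?_
  refine (Finset.sum_congr rfl fun a _ => Finset.sum_congr rfl fun b _ =>
    Finset.sum_comm).trans ?_
  refine (Finset.sum_congr rfl fun a _ => Finset.sum_comm).trans ?_
  exact Finset.sum_comm

lemma char_sum {p : ℕ} [NeZero p] {ι : Type*} (s : Finset ι) (f : ι → ZMod p) :
    ZMod.stdAddChar (∑ i ∈ s, f i) = ∏ i ∈ s, ZMod.stdAddChar (f i) := by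
  classical
  induction s using Finset.cons_induction with
  | empty => simp
  | cons i s hi ih => rw [Finset.sum_cons, Finset.prod_cons, AddChar.map_add_eq_mul, ih]

lemma prod8 {p : ℕ} [NeZero p] (S : Finset (ZMod p)) (F G : ZMod p → ZMod p)
    (c d : Fin 8 → ZMod p) :
    (∏ i, ((1 / (p:ℂ)) * ∑ y ∈ S, ZMod.stdAddChar (c i * F y + d i * G y)))
      = (1 / (p:ℂ))^8 * ∑ y ∈ Fintype.piFinset (fun _ : Fin 8 => S),
          ZMod.stdAddChar (∑ i, (c i * F (y i) + d i * G (y i))) := by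
  rw [Finset.prod_mul_distrib, Finset.prod_const, Finset.card_univ, Fintype.card_fin,
    Finset.prod_univ_sum]
  congr 1
  exact Finset.sum_congr rfl fun g _ => (char_sum _ _).symm

lemma sum_char_mul {p : ℕ} [Fact p.Prime] (t : ZMod p) :
    ∑ n : ZMod p, ZMod.stdAddChar (n * t) = if t = 0 then (p:ℂ) else 0 := by
  classical
  rw [AddChar.sum_mulShift _ (ZMod.isPrimitive_stdAddChar p)]
  simp [ZMod.card]

lemma quint {p : ℕ} [Fact p.Prime] (A B C D E : ZMod p) :
    (∑ n₁ : ZMod p, ∑ m₁ : ZMod p, ∑ a : ZMod p, ∑ b : ZMod p, ∑ b' : ZMod p,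
      ZMod.stdAddChar (n₁ * A + (m₁ * B + (a * C + (b * D + b' * E)))))
    = if A = 0 ∧ B = 0 ∧ C = 0 ∧ D = 0 ∧ E = 0 then (p:ℂ)^5 else 0 := by
  classical
  simp_rw [AddChar.map_add_eq_mul, ← Finset.mul_sum, ← Finset.sum_mul, sum_char_mul]
  by_cases hA : A = 0 <;> by_cases hB : B = 0 <;> by_cases hC : C = 0 <;>
    by_cases hD : D = 0 <;> by_cases hE : E = 0 <;>
    simp [hA, hB, hC, hD, hE] <;> ring

lemma vec8_0 {α : Type*} (a0 a1 a2 a3 a4 a5 a6 a7 : α) :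
    ![a0,a1,a2,a3,a4,a5,a6,a7] (0 : Fin 8) = a0 := rfl
lemma vec8_1 {α : Type*} (a0 a1 a2 a3 a4 a5 a6 a7 : α) :
    ![a0,a1,a2,a3,a4,a5,a6,a7] (1 : Fin 8) = a1 := rfl
lemma vec8_2 {α : Type*} (a0 a1 a2 a3 a4 a5 a6 a7 : α) :
    ![a0,a1,a2,a3,a4,a5,a6,a7] (2 : Fin 8) = a2 := rfl
lemma vec8_3 {α : Type*} (a0 a1 a2 a3 a4 a5 a6 a7 : α) :
    ![a0,a1,a2,a3,a4,a5,a6,a7] (3 : Fin 8) = a3 := rfl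
lemma vec8_4 {α : Type*} (a0 a1 a2 a3 a4 a5 a6 a7 : α) :
    ![a0,a1,a2,a3,a4,a5,a6,a7] (4 : Fin 8) = a4 := rfl
lemma vec8_5 {α : Type*} (a0 a1 a2 a3 a4 a5 a6 a7 : α) :
    ![a0,a1,a2,a3,a4,a5,a6,a7] (5 : Fin 8) = a5 := rfl
lemma vec8_6 {α : Type*} (a0 a1 a2 a3 a4 a5 a6 a7 : α) :
    ![a0,a1,a2,a3,a4,a5,a6,a7] (6 : Fin 8) = a6 := rfl
lemma vec8_7 {α : Type*} (a0 a1 a2 a3 a4 a5 a6 a7 : α) :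
    ![a0,a1,a2,a3,a4,a5,a6,a7] (7 : Fin 8) = a7 := rfl


set_option maxHeartbeats 2000000 in
theorem eighth_moment_eq_roth_count (p : ℕ) [Fact p.Prime]
    (S : Finset (ZMod p)) (F G : ZMod p → ZMod p)
    (K : ZMod p → ZMod p → ℂ)
    (hK : ∀ n₁ n₂ : ZMod p, K n₁ n₂ = (1 / p) * ∑ y ∈ S, ep p (n₁ * F y + n₂ * G y)) :
    ∑ n₁ : ZMod p, ∑ m₁ : ZMod p, ∑ a : ZMod p, ∑ b : ZMod p, ∑ b' : ZMod p,
        K (n₁ - b) b * (starRingEnd ℂ) (K (m₁ - b) b) *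
          (starRingEnd ℂ) (K (n₁ - b) (b - a)) * K (m₁ - b) (b - a) *
          (starRingEnd ℂ) (K (n₁ - b') b') * K (m₁ - b') b' *
          K (n₁ - b') (b' - a) * (starRingEnd ℂ) (K (m₁ - b') (b' - a)) =
      (1 / (p : ℂ) ^ 3) * (rothSet p S F G).card := by
  classical
  have hp : (p : ℂ) ≠ 0 := Nat.cast_ne_zero.mpr (Fact.out (p := p.Prime)).ne_zero
  have hK' : ∀ n m : ZMod p, K n m
      = (1 / (p:ℂ)) * ∑ y ∈ S, ZMod.stdAddChar (n * F y + m * G y) := by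
    intro n m; rw [hK]; congr 1; exact Finset.sum_congr rfl fun y _ => ep_eq_char p _
  have hKc : ∀ n m : ZMod p, (starRingEnd ℂ) (K n m)
      = (1 / (p:ℂ)) * ∑ y ∈ S, ZMod.stdAddChar ((-n) * F y + (-m) * G y) := by
    intro n m
    rw [hK' n m, map_mul, map_sum]
    congr 1
    · simp
    · refine Finset.sum_congr rfl fun y _ => ?_
      rw [conj_char]; congr 1; ring
  simp_rw [hKc, hK']
  have hfac : ∀ n₁ m₁ a b b' : ZMod p,
      ((1/(p:ℂ)) * ∑ y ∈ S, ZMod.stdAddChar ((n₁-b) * F y + b * G y)) *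
        ((1/(p:ℂ)) * ∑ y ∈ S, ZMod.stdAddChar ((-(m₁-b)) * F y + (-b) * G y)) *
        ((1/(p:ℂ)) * ∑ y ∈ S, ZMod.stdAddChar ((-(n₁-b)) * F y + (-(b-a)) * G y)) *
        ((1/(p:ℂ)) * ∑ y ∈ S, ZMod.stdAddChar ((m₁-b) * F y + (b-a) * G y)) *
        ((1/(p:ℂ)) * ∑ y ∈ S, ZMod.stdAddChar ((-(n₁-b')) * F y + (-b') * G y)) *
        ((1/(p:ℂ)) * ∑ y ∈ S, ZMod.stdAddChar ((m₁-b') * F y + b' * G y)) *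
        ((1/(p:ℂ)) * ∑ y ∈ S, ZMod.stdAddChar ((n₁-b') * F y + (b'-a) * G y)) *
        ((1/(p:ℂ)) * ∑ y ∈ S, ZMod.stdAddChar ((-(m₁-b')) * F y + (-(b'-a)) * G y))
      = (1 / (p:ℂ))^8 * ∑ y ∈ Fintype.piFinset (fun _ : Fin 8 => S),
          ZMod.stdAddChar (∑ i,
            ((![n₁-b, -(m₁-b), -(n₁-b), m₁-b, -(n₁-b'), m₁-b', n₁-b', -(m₁-b')]) i * F (y i)
              + (![b, -b, -(b-a), b-a, -b', b', b'-a, -(b'-a)]) i * G (y i))) := by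
    intro n₁ m₁ a b b'
    have := prod8 S F G ![n₁-b, -(m₁-b), -(n₁-b), m₁-b, -(n₁-b'), m₁-b', n₁-b', -(m₁-b')]
      ![b, -b, -(b-a), b-a, -b', b', b'-a, -(b'-a)]
    rw [Fin.prod_univ_eight] at this
    simpa using this
  simp_rw [hfac]
  have hphase : ∀ n₁ m₁ a b b' : ZMod p, ∀ y : Fin 8 → ZMod p,
      (∑ i, ((![n₁-b, -(m₁-b), -(n₁-b), m₁-b, -(n₁-b'), m₁-b', n₁-b', -(m₁-b')]) i * F (y i)
              + (![b, -b, -(b-a), b-a, -b', b', b'-a, -(b'-a)]) i * G (y i)))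
      = n₁ * (F (y 0) - F (y 2) - F (y 4) + F (y 6))
        + (m₁ * (-(F (y 1) - F (y 3) - F (y 5) + F (y 7)))
        + (a * (G (y 2) - G (y 3) - G (y 6) + G (y 7))
        + (b * (-(F (y 0) - G (y 0) - F (y 1) + G (y 1) - F (y 2) + G (y 2) + F (y 3) - G (y 3)))
        + b' * (F (y 4) - G (y 4) - F (y 5) + G (y 5) - F (y 6) + G (y 6) + F (y 7) - G (y 7))))) := by
    intro n₁ m₁ a b b' y
    rw [Fin.sum_univ_eight]
    simp only [vec8_0, vec8_1, vec8_2, vec8_3, vec8_4, vec8_5, vec8_6, vec8_7]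
    ring
  simp_rw [hphase, ← Finset.mul_sum]
  rw [swap6]
  simp_rw [quint]
  rw [← Finset.sum_filter, Finset.sum_const, nsmul_eq_mul]
  have hset : (Fintype.piFinset (fun _ : Fin 8 => S)).filter
      (fun y => F (y 0) - F (y 2) - F (y 4) + F (y 6) = 0 ∧
        -(F (y 1) - F (y 3) - F (y 5) + F (y 7)) = 0 ∧
        G (y 2) - G (y 3) - G (y 6) + G (y 7) = 0 ∧
        -(F (y 0) - G (y 0) - F (y 1) + G (y 1) - F (y 2) + G (y 2) + F (y 3) - G (y 3)) = 0 ∧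
        F (y 4) - G (y 4) - F (y 5) + G (y 5) - F (y 6) + G (y 6) + F (y 7) - G (y 7) = 0)
      = rothSet p S F G := by
    ext y
    simp only [Finset.mem_filter, Fintype.mem_piFinset, rothSet, Finset.mem_univ, true_and,
      neg_eq_zero]
    tauto
  rw [hset]
  field_simp
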